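/- Let V be an F_q-subspace of F_{q^n} of dimension k. For any integer i with 1 ≤ i ≤ q^n − 1 whose q-weight is less than k(q−1), the power sum Σ_{v ∈ V} v^i equals zero. -/

import Mathlib

open Finset

/-- If there are no carries in any position when adding `a` and `b` in base `Q`,
then each base-`Q` digit of `a + b` is the sum of the digits of `a` and `b`. -/
lemma digit_add_of_carry_free {Q a b : ℕ} (hQ : 1 ≤ Q)
    (h : ∀ t, a % Q ^ t + b % Q ^ t < Q ^ t) (t : ℕ) :
    (a + b) / Q ^ t % Q = a / Q ^ t % Q + b / Q ^ t % Q := by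
  have hd : 0 < Q ^ t := pow_pos hQ t
  have hdiv : (a + b) / Q ^ t = a / Q ^ t + b / Q ^ t := by
    conv_lhs => rw [← Nat.div_add_mod a (Q ^ t), ← Nat.div_add_mod b (Q ^ t)]
    rw [show Q ^ t * (a / Q ^ t) + a % Q ^ t + (Q ^ t * (b / Q ^ t) + b % Q ^ t)
        = Q ^ t * (a / Q ^ t + b / Q ^ t) + (a % Q ^ t + b % Q ^ t) by ring,
      Nat.mul_add_div hd, Nat.div_eq_of_lt (h t), Nat.add_zero]
  have hlt : a / Q ^ t % Q + b / Q ^ t % Q < Q := by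
    have h2 := h (t + 1)
    rw [pow_succ, Nat.mod_mul, Nat.mod_mul] at h2
    by_contra hc
    push_neg at hc
    have hmul : Q ^ t * Q ≤ Q ^ t * (a / Q ^ t % Q) + Q ^ t * (b / Q ^ t % Q) := by
      rw [← Nat.mul_add]; exact Nat.mul_le_mul_left _ hc
    have hmul2 : Q ^ t * (a / Q ^ t % Q) + Q ^ t * (b / Q ^ t % Q)
        ≤ a % Q ^ t + Q ^ t * (a / Q ^ t % Q) + (b % Q ^ t + Q ^ t * (b / Q ^ t % Q)) :=
      Nat.add_le_add (Nat.le_add_left _ _) (Nat.le_add_left _ _)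
    exact absurd h2 (not_lt.2 (hmul.trans hmul2))
  rw [hdiv, Nat.add_mod, Nat.mod_eq_of_lt hlt]

/-- Kummer: if `p` does not divide `(a+b).choose a` then adding `a` and `b`
in base `p` produces no carries. -/
lemma carry_free_of_not_dvd_choose {p a b : ℕ} (hp : p.Prime)
    (h : ¬ p ∣ (a + b).choose a) (t : ℕ) : a % p ^ t + b % p ^ t < p ^ t := by
  rcases Nat.eq_zero_or_pos t with rfl | ht
  · simp [Nat.mod_one]
  set B := max (Nat.log p (a + b) + 1) (t + 1) with hB
  have hkn : a ≤ a + b := Nat.le_add_right a b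
  have hnb : Nat.log p (a + b) < B := lt_of_lt_of_le (Nat.lt_succ_self _) (le_max_left _ _)
  have hk := hp.emultiplicity_choose hkn hnb
  rw [emultiplicity_eq_zero.2 h] at hk
  have hcard : (Finset.filter (fun i => p ^ i ≤ a % p ^ i + (a + b - a) % p ^ i)
      (Finset.Ico 1 B)).card = 0 := by exact_mod_cast hk.symm
  rw [Finset.card_eq_zero] at hcard
  by_contra hc
  push_neg at hc
  have htB : t ∈ Finset.Ico 1 B :=
    Finset.mem_Ico.2 ⟨ht, lt_of_lt_of_le (Nat.lt_succ_self t) (le_max_right _ _)⟩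
  have : t ∈ Finset.filter (fun i => p ^ i ≤ a % p ^ i + (a + b - a) % p ^ i)
      (Finset.Ico 1 B) := Finset.mem_filter.2 ⟨htB, by simpa [Nat.add_sub_cancel_left] using hc⟩
  rw [hcard] at this
  exact absurd this (Finset.notMem_empty t)

/-- The truncated digit sum is congruent to the number mod `Q - 1`. -/
lemma wt_modeq {Q : ℕ} (hQ : 2 ≤ Q) : ∀ (n m : ℕ), m < Q ^ n →
    m ≡ ∑ t ∈ Finset.range n, m / Q ^ t % Q [MOD Q - 1] := by
  intro n
  induction n with
  | zero =>
    intro m hm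
    have : m = 0 := by simpa using Nat.lt_one_iff.mp (by simpa using hm)
    simp [this, Nat.ModEq.refl]
  | succ n ih =>
    intro m hm
    have hQ0 : 0 < Q := by omega
    rw [Finset.sum_range_succ']
    have hshift : ∀ t, m / Q ^ (t + 1) % Q = (m / Q) / Q ^ t % Q := by
      intro t
      rw [Nat.div_div_eq_div_mul, ← pow_succ']
    rw [Finset.sum_congr rfl (fun t _ => hshift t)]
    have hlt : m / Q < Q ^ n := by
      rw [Nat.div_lt_iff_lt_mul hQ0, ← pow_succ]
      exact hm
    have h1 : Q ≡ 1 [MOD Q - 1] :=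
      ((Nat.modEq_iff_dvd' (by omega : 1 ≤ Q)).2 dvd_rfl).symm
    calc m = Q * (m / Q) + m % Q := (Nat.div_add_mod m Q).symm
      _ ≡ 1 * (m / Q) + m % Q [MOD Q - 1] := Nat.ModEq.add_right _ (h1.mul_right _)
      _ = m / Q + m % Q := by ring_nf
      _ ≡ (∑ t ∈ Finset.range n, (m / Q) / Q ^ t % Q) + m % Q [MOD Q - 1] :=
        Nat.ModEq.add_right _ (ih (m / Q) hlt)
      _ = (∑ t ∈ Finset.range n, (m / Q) / Q ^ t % Q) + m / Q ^ 0 % Q := by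
        rw [pow_zero, Nat.div_one]

/-- If the truncated digit sum of `m < Q^n` vanishes then `m = 0`. -/
lemma wt_eq_zero {Q : ℕ} (hQ : 2 ≤ Q) : ∀ (n m : ℕ), m < Q ^ n →
    (∑ t ∈ Finset.range n, m / Q ^ t % Q) = 0 → m = 0 := by
  intro n
  induction n with
  | zero => intro m hm _; simpa using Nat.lt_one_iff.mp (by simpa using hm)
  | succ n ih =>
    intro m hm hsum
    have hQ0 : 0 < Q := by omega
    rw [Finset.sum_range_succ'] at hsum
    have hshift : ∀ t, m / Q ^ (t + 1) % Q = (m / Q) / Q ^ t % Q := by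
      intro t
      rw [Nat.div_div_eq_div_mul, ← pow_succ']
    rw [Finset.sum_congr rfl (fun t _ => hshift t)] at hsum
    have h0 : m / Q ^ 0 % Q = 0 := by omega
    have hrest : (∑ t ∈ Finset.range n, (m / Q) / Q ^ t % Q) = 0 := by omega
    have hlt : m / Q < Q ^ n := by
      rw [Nat.div_lt_iff_lt_mul hQ0, ← pow_succ]
      exact hm
    have hdiv0 := ih (m / Q) hlt hrest
    rw [pow_zero, Nat.div_one] at h0
    have hdm := Nat.div_add_mod m Q
    rw [hdiv0, h0] at hdm
    simpa using hdm.symm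

/-- If `Q - 1 ∣ m` and `1 ≤ m < Q ^ n` then the truncated digit sum is at least `Q - 1`. -/
lemma wt_ge {Q n m : ℕ} (hQ : 2 ≤ Q) (hm1 : 1 ≤ m) (hm2 : m < Q ^ n)
    (hdvd : Q - 1 ∣ m) : Q - 1 ≤ ∑ t ∈ Finset.range n, m / Q ^ t % Q := by
  have hmod := wt_modeq hQ n m hm2
  have hdvd' : Q - 1 ∣ ∑ t ∈ Finset.range n, m / Q ^ t % Q :=
    (Nat.modEq_zero_iff_dvd).1 (hmod.symm.trans ((Nat.modEq_zero_iff_dvd).2 hdvd))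
  have hne : (∑ t ∈ Finset.range n, m / Q ^ t % Q) ≠ 0 := by
    intro h
    have := wt_eq_zero hQ n m hm2 h
    omega
  exact Nat.le_of_dvd (Nat.pos_of_ne_zero hne) hdvd'

/-- Sum of `x ^ j` over a finite field vanishes when `j ≠ 0` and `q - 1 ∤ j`. -/
lemma sum_pow_eq_zero' {K : Type*} [Field K] [Fintype K] {j : ℕ} (hj : j ≠ 0)
    (h : ¬ (Fintype.card K - 1) ∣ j) : ∑ x : K, x ^ j = 0 := by
  classical
  let φ : Kˣ ↪ K := ⟨fun x ↦ x, Units.val_injective⟩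
  have hmap : Finset.univ.map φ = Finset.univ \ {0} := by
    ext x
    simpa only [Finset.mem_map, Finset.mem_univ, Function.Embedding.coeFn_mk, true_and,
      Finset.mem_sdiff, Finset.mem_singleton, φ] using
      (show (∃ a : Kˣ, (a : K) = x) ↔ x ≠ 0 from isUnit_iff_ne_zero)
  calc
    ∑ x : K, x ^ j = ∑ x ∈ Finset.univ \ {(0 : K)}, x ^ j := by
      rw [← Finset.sum_sdiff (Finset.subset_univ {0}), Finset.sum_singleton, zero_pow hj,
        add_zero]
    _ = ∑ x : Kˣ, ((x : K)) ^ j := by simp [φ, ← hmap, Finset.univ.sum_map φ]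
    _ = 0 := by
      have := FiniteField.sum_pow_units K j
      rw [if_neg h] at this
      simpa using this

/-- Key lemma: power sums over all `K`-linear combinations of `k` vectors vanish
when the digit weight of the exponent is less than `k (q - 1)`. -/
lemma key_lemma {K F : Type*} [Field K] [Field F] [Algebra K F] [Fintype K]
    (p : ℕ) [CharP K p] (hp : p.Prime) (s : ℕ) (hs : 1 ≤ s)
    (hq : Fintype.card K = p ^ s) (n : ℕ) :
    ∀ (k : ℕ) (e : Fin k → F) (i : ℕ), 1 ≤ i → i < Fintype.card K ^ n →
    (∑ t ∈ Finset.range n, i / Fintype.card K ^ t % Fintype.card K)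
      < k * (Fintype.card K - 1) →
    ∑ x : Fin k → K, (∑ j, x j • e j) ^ i = 0 := by
  classical
  haveI : CharP F p := charP_of_injective_algebraMap (algebraMap K F).injective p
  intro k
  induction k with
  | zero =>
    intro e i hi1 _ _
    simp [zero_pow (Nat.one_le_iff_ne_zero.mp hi1)]
  | succ k ih =>
    intro e i hi1 hi2 hwt
    have hq2 : 2 ≤ Fintype.card K := Fintype.one_lt_card
    set q := Fintype.card K with hqdef
    -- reindex the sum over `Fin (k+1) → K` as a double sum
    have hsum : ∑ x : Fin (k + 1) → K, (∑ j, x j • e j) ^ i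
        = ∑ z : K × (Fin k → K),
            (z.1 • e 0 + ∑ j : Fin k, z.2 j • e j.succ) ^ i := by
      rw [← (Fin.consEquiv (fun _ : Fin (k + 1) => K)).sum_comp
        (fun x : Fin (k + 1) → K => (∑ j, x j • e j) ^ i)]
      refine Finset.sum_congr rfl fun z _ => ?_
      simp [Fin.sum_univ_succ]
    rw [hsum]
    have hexp : ∀ (c : K) (y : Fin k → K),
        (c • e 0 + ∑ j : Fin k, y j • e j.succ) ^ i
        = ∑ m ∈ Finset.range (i + 1),
            c ^ m • ((e 0) ^ m * (∑ j : Fin k, y j • e j.succ) ^ (i - m)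
              * (Nat.choose i m : F)) := by
      intro c y
      rw [add_pow]
      refine Finset.sum_congr rfl fun m _ => ?_
      rw [smul_pow, smul_mul_assoc, smul_mul_assoc]
    simp_rw [hexp]
    rw [Finset.sum_comm]
    refine Finset.sum_eq_zero fun m hm => ?_
    rw [Fintype.sum_prod_type]
    have hmle : m ≤ i := Nat.lt_succ_iff.mp (Finset.mem_range.mp hm)
    -- factor the sums
    have hfact : ∑ c : K, ∑ y : Fin k → K,
        c ^ m • ((e 0) ^ m * (∑ j : Fin k, y j • e j.succ) ^ (i - m)
          * (Nat.choose i m : F))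
        = (∑ c : K, c ^ m) • ((e 0) ^ m
            * (∑ y : Fin k → K, (∑ j : Fin k, y j • e j.succ) ^ (i - m))
            * (Nat.choose i m : F)) := by
      rw [Finset.sum_smul]
      refine Finset.sum_congr rfl fun c _ => ?_
      rw [← Finset.smul_sum]
      congr 1
      rw [Finset.mul_sum, Finset.sum_mul]
    rw [hfact]
    by_cases hm0 : m = 0
    · subst hm0
      have : (∑ c : K, c ^ 0) = 0 := by
        calc (∑ c : K, c ^ 0) = (Fintype.card K : K) := by simp [Finset.card_univ]
          _ = 0 := Nat.cast_card_eq_zero K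
      rw [this, zero_smul]
    by_cases hdvd : (q - 1) ∣ m
    · by_cases hC : p ∣ Nat.choose i m
      · have : (Nat.choose i m : F) = 0 := (CharP.cast_eq_zero_iff F p _).2 hC
        rw [this, mul_zero, smul_zero]
      · -- no carries when adding m and i - m in base p, hence in base q
        have hcf : ∀ t, m % q ^ t + (i - m) % q ^ t < q ^ t := by
          intro t
          have h' := carry_free_of_not_dvd_choose hp
            (a := m) (b := i - m) (by rwa [Nat.add_sub_cancel' hmle]) (s * t)
          rw [hq, ← pow_mul]
          exact h'
        by_cases hmi : m = i
        · rcases Nat.eq_zero_or_pos k with rfl | hk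
          · -- k = 0 : contradiction with the weight hypothesis
            exfalso
            have hge := wt_ge hq2 hi1 hi2 (hmi ▸ hdvd)
            omega
          · -- k ≥ 1 : the inner sum is `q ^ k = 0` in `F`
            have hz : (∑ y : Fin k → K,
                (∑ j : Fin k, y j • e j.succ) ^ (i - m)) = 0 := by
              rw [hmi, Nat.sub_self]
              simp only [pow_zero]
              rw [Finset.sum_const, Finset.card_univ, Fintype.card_fun,
                Fintype.card_fin, nsmul_one]
              have hpF : ((p : F)) = 0 := CharP.cast_eq_zero F p
              rw [← hqdef, hq]
              push_cast
              rw [hpF]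
              rw [zero_pow (by omega : s ≠ 0), zero_pow (by omega : k ≠ 0)]
            rw [hz, mul_zero, zero_mul, smul_zero]
        · -- m < i : apply the induction hypothesis
          have hmlt : m < i := lt_of_le_of_ne hmle hmi
          have h1 : 1 ≤ i - m := by omega
          have h2 : i - m < q ^ n := by omega
          have hadd : ∀ t, i / q ^ t % q = m / q ^ t % q + (i - m) / q ^ t % q := by
            intro t
            have := digit_add_of_carry_free (by omega) hcf t
            rwa [Nat.add_sub_cancel' hmle] at this
          have hwtadd : (∑ t ∈ Finset.range n, i / q ^ t % q)
              = (∑ t ∈ Finset.range n, m / q ^ t % q)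
                + ∑ t ∈ Finset.range n, (i - m) / q ^ t % q := by
            rw [← Finset.sum_add_distrib]
            exact Finset.sum_congr rfl fun t _ => hadd t
          have hwtm : q - 1 ≤ ∑ t ∈ Finset.range n, m / q ^ t % q :=
            wt_ge hq2 (Nat.one_le_iff_ne_zero.mpr hm0) (by omega) hdvd
          have h3 : (∑ t ∈ Finset.range n, (i - m) / q ^ t % q) < k * (q - 1) := by
            have hexpand : (k + 1) * (q - 1) = k * (q - 1) + (q - 1) := by ring
            omega
          have := ih (fun j => e j.succ) (i - m) h1 h2 h3
          rw [this, mul_zero, zero_mul, smul_zero]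
    · rw [sum_pow_eq_zero' hm0 hdvd, zero_smul]

/-- let `V` be an `F_q`-subspace of `F_{q^n}` of dimension `k`.
For any `1 ≤ i ≤ q^n - 1` whose `q`-weight is less than `k(q-1)`,
the power sum `Σ_{v ∈ V} v^i` is zero. -/
theorem stmt_6 {K F : Type*} [Field K] [Field F] [Algebra K F] [Fintype K] [Fintype F]
    (n k : ℕ) (hn : 1 ≤ n) (hkn : k ≤ n)
    (hF : Fintype.card F = (Fintype.card K) ^ n)
    (V : Submodule K F) [Fintype ↥V] (hV : Module.finrank K ↥V = k)
    (i : ℕ) (hi1 : 1 ≤ i) (hi2 : i ≤ (Fintype.card K) ^ n - 1)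
    (hwt : ∑ j ∈ Finset.range n, i / (Fintype.card K) ^ j % (Fintype.card K)
            < k * (Fintype.card K - 1)) :
    ∑ v : V, (v : F) ^ i = 0 := by
  classical
  haveI : CharP K (ringChar K) := ringChar.charP K
  obtain ⟨s, hp, hq⟩ := FiniteField.card K (ringChar K)
  haveI : Module.Finite K ↥V := Module.Finite.of_finite (R := K)
  let b : Module.Basis (Fin k) K ↥V := Module.finBasisOfFinrankEq K ↥V hV
  have hcoe : ∀ x : Fin k → K, ((b.equivFun.symm x : ↥V) : F) = ∑ j, x j • (b j : F) := by
    intro x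
    rw [Module.Basis.equivFun_symm_apply]
    push_cast
    rfl
  have hsum : ∑ v : V, (v : F) ^ i
      = ∑ x : Fin k → K, (∑ j, x j • (b j : F)) ^ i := by
    refine Fintype.sum_equiv b.equivFun.toEquiv _ _ fun v => ?_
    have h1 : ((v : F)) = ∑ j, (b.equivFun v) j • ((b j : ↥V) : F) := by
      have h2 := b.sum_equivFun v
      calc ((v : F)) = (((∑ j, b.equivFun v j • b j : ↥V)) : F) := by rw [h2]
        _ = ∑ j, (b.equivFun v) j • ((b j : ↥V) : F) := by push_cast; rfl
    simp only [LinearEquiv.coe_toEquiv]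
    rw [h1]
  rw [hsum]
  have hpos : 0 < Fintype.card K ^ n := pow_pos Fintype.card_pos n
  exact key_lemma (ringChar K) hp (s : ℕ) s.pos (by exact_mod_cast hq) n k
    (fun j => (b j : F)) i hi1 (by omega) hwt
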